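/- Let m = 2^l and n = 4m+1, and let T_l be the oriented graph with vertices x_i for i ∈ Z/nZ and arcs x_i x_{i+m} and x_i x_{i+m+1}. Assigning to x_i the m-element set {i, i+1, ..., i+m−1} (mod n) is a valid m-fold oriented n-coloring of T_l; consequently χ_o^*(T_l) ≤ 4 + 1/2^l. -/

import Mathlib

/-- An oriented graph: a directed graph with no loops and no directed 2-cycles. -/
structure OGraph (V : Type*) where
  adj : V → V → Prop
  irrefl : ∀ v, ¬ adj v v
  asymm : ∀ u v, adj u v → ¬ adj v u

/-- A homomorphism of oriented graphs. -/
def OGraph.Hom {V W : Type*} (G : OGraph V) (H : OGraph W) (f : V → W) : Prop :=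
  ∀ u v, G.adj u v → H.adj (f u) (f v)

/-- `f` is a `b`-fold oriented `k`-coloring of `G`. -/
def IsFoldColoring {V : Type*} (G : OGraph V) (b k : ℕ) (f : V → Finset (Fin k)) : Prop :=
  (∀ v, (f v).card = b) ∧
  (∀ u v, G.adj u v → Disjoint (f u) (f v)) ∧
  (∀ x y z w, G.adj x y → G.adj z w → ¬ Disjoint (f x) (f w) → Disjoint (f y) (f z))

/-- The `b`-fold oriented chromatic number. -/
noncomputable def foldChrom {V : Type*} (G : OGraph V) (b : ℕ) : ℕ :=
  sInf {k | ∃ f : V → Finset (Fin k), IsFoldColoring G b k f}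

/-- The fractional oriented chromatic number: the infimum of `k/b` over all
`b`-fold oriented `k`-colorings. -/
noncomputable def fracChrom {V : Type*} (G : OGraph V) : ℝ :=
  sInf {x : ℝ | ∃ (b k : ℕ) (f : V → Finset (Fin k)),
    0 < b ∧ IsFoldColoring G b k f ∧ x = (k : ℝ) / b}

/-- The oriented graph `T_l` on `ℤ/(4·2^l+1)ℤ` with arcs `x → x + 2^l` and `x → x + 2^l + 1`. -/
def Tgraph (l : ℕ) : OGraph (ZMod (4 * 2 ^ l + 1)) where
  adj u v := v = u + (2 ^ l : ℕ) ∨ v = u + (2 ^ l : ℕ) + 1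
  irrefl := by
    intro v hv
    have hm : 0 < 2 ^ l := Nat.pow_pos (by norm_num)
    rcases hv with h | h
    · have h1 : ((2 ^ l : ℕ) : ZMod (4 * 2 ^ l + 1)) = 0 := left_eq_add.mp h
      rw [ZMod.natCast_eq_zero_iff] at h1
      have := Nat.le_of_dvd hm h1
      omega
    · have h1 : ((2 ^ l + 1 : ℕ) : ZMod (4 * 2 ^ l + 1)) = 0 := by
        have := left_eq_add.mp (by rwa [add_assoc] at h)
        push_cast
        push_cast at this
        linear_combination this
      rw [ZMod.natCast_eq_zero_iff] at h1
      have := Nat.le_of_dvd (by omega) h1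
      omega
  asymm := by
    intro u v h1 h2
    have key : ∀ a : ℕ, 0 < a → a < 4 * 2 ^ l + 1 →
        ((a : ℕ) : ZMod (4 * 2 ^ l + 1)) ≠ 0 := by
      intro a ha hlt h0
      rw [ZMod.natCast_eq_zero_iff] at h0
      have := Nat.le_of_dvd ha h0
      omega
    have hm : 0 < 2 ^ l := Nat.pow_pos (by norm_num)
    rcases h1 with h1 | h1 <;> rcases h2 with h2 | h2
    · have : ((2 ^ l + 2 ^ l : ℕ) : ZMod (4 * 2 ^ l + 1)) = 0 := by
        have : u = u + ((2 ^ l : ℕ) + (2 ^ l : ℕ)) := by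
          conv_lhs => rw [h2, h1]
          ring
        have := left_eq_add.mp this
        push_cast
        push_cast at this
        linear_combination this
      exact key _ (by omega) (by omega) this
    · have : ((2 ^ l + 2 ^ l + 1 : ℕ) : ZMod (4 * 2 ^ l + 1)) = 0 := by
        have : u = u + ((2 ^ l : ℕ) + (2 ^ l : ℕ) + 1) := by
          conv_lhs => rw [h2, h1]
          ring
        have := left_eq_add.mp this
        push_cast
        push_cast at this
        linear_combination this
      exact key _ (by omega) (by omega) this
    · have : ((2 ^ l + 2 ^ l + 1 : ℕ) : ZMod (4 * 2 ^ l + 1)) = 0 := by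
        have : u = u + ((2 ^ l : ℕ) + (2 ^ l : ℕ) + 1) := by
          conv_lhs => rw [h2, h1]
          ring
        have := left_eq_add.mp this
        push_cast
        push_cast at this
        linear_combination this
      exact key _ (by omega) (by omega) this
    · have : ((2 ^ l + 2 ^ l + 2 : ℕ) : ZMod (4 * 2 ^ l + 1)) = 0 := by
        have : u = u + ((2 ^ l : ℕ) + (2 ^ l : ℕ) + 2) := by
          conv_lhs => rw [h2, h1]
          ring
        have := left_eq_add.mp this
        push_cast
        push_cast at this
        linear_combination this
      exact key _ (by omega) (by omega) this

theorem stmt18 (l : ℕ) :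
    IsFoldColoring (Tgraph l) (2 ^ l) (4 * 2 ^ l + 1)
      (fun i : ZMod (4 * 2 ^ l + 1) =>
        (Finset.range (2 ^ l)).image
          (fun j => (⟨(i + (j : ℕ)).val, ZMod.val_lt _⟩ : Fin (4 * 2 ^ l + 1)))) ∧
    fracChrom (Tgraph l) ≤ 4 + 1 / (2 ^ l : ℝ) := by
  set m := 2 ^ l with hmdef
  set n := 4 * m + 1 with hndef
  have hm0 : 0 < m := Nat.pow_pos (by norm_num)
  have : NeZero n := ⟨by omega⟩
  set F : ZMod n → Finset (Fin n) := fun i =>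
    (Finset.range m).image
      (fun j => (⟨(i + (j : ℕ)).val, ZMod.val_lt _⟩ : Fin n)) with hF
  have hvalpos : ∀ a : ℕ, a < n → ((a : ZMod n)).val = a := fun a ha =>
    ZMod.val_natCast_of_lt ha
  have hvalneg : ∀ a : ℕ, 0 < a → a < n → ((-(a : ℕ) : ZMod n)).val = n - a := by
    intro a ha0 han
    have h1 : (-(a : ℕ) : ZMod n) = ((n - a : ℕ) : ZMod n) := by
      rw [Nat.cast_sub (le_of_lt han), ZMod.natCast_self]
      ring
    rw [h1, hvalpos _ (by omega)]
  -- the key disjointness lemma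
  have key : ∀ x w : ZMod n, m ≤ (w - x).val → m ≤ (x - w).val →
      Disjoint (F x) (F w) := by
    intro x w h1 h2
    rw [Finset.disjoint_left]
    rintro c hc1 hc2
    simp only [hF, Finset.mem_image, Finset.mem_range] at hc1 hc2
    obtain ⟨j1, hj1, e1⟩ := hc1
    obtain ⟨j2, hj2, e2⟩ := hc2
    have e : x + (j1 : ℕ) = w + (j2 : ℕ) := by
      apply ZMod.val_injective
      have := congrArg Fin.val (e1.trans e2.symm)
      simpa using this
    rcases le_or_gt j2 j1 with h | h
    · have : w - x = ((j1 - j2 : ℕ) : ZMod n) := by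
        push_cast [Nat.cast_sub h]
        linear_combination -e
      rw [this, hvalpos _ (by omega)] at h1
      omega
    · have : x - w = ((j2 - j1 : ℕ) : ZMod n) := by
        push_cast [Nat.cast_sub (le_of_lt h)]
        linear_combination e
      rw [this, hvalpos _ (by omega)] at h2
      omega
  have getA : ∀ u v : ZMod n, (Tgraph l).adj u v →
      ∃ a : ℕ, m ≤ a ∧ a ≤ m + 1 ∧ v = u + (a : ℕ) := by
    intro u v h
    rcases h with h | h
    · exact ⟨m, le_refl _, by omega, by rw [h, hmdef]⟩
    · exact ⟨m + 1, by omega, le_refl _, by rw [h, hmdef]; push_cast; ring⟩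
  have hcol : IsFoldColoring (Tgraph l) m n F := by
    refine ⟨?_, ?_, ?_⟩
    · -- cardinality
      intro v
      rw [hF]
      rw [Finset.card_image_of_injOn, Finset.card_range]
      intro j1 hj1 j2 hj2 he
      simp only [Finset.coe_range, Set.mem_Iio] at hj1 hj2
      have e : v + (j1 : ℕ) = v + (j2 : ℕ) := by
        apply ZMod.val_injective
        exact congrArg Fin.val he
      have : ((j1 : ℕ) : ZMod n) = ((j2 : ℕ) : ZMod n) := by
        linear_combination e
      have := congrArg ZMod.val this
      rwa [hvalpos _ (by omega), hvalpos _ (by omega)] at this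
    · -- adjacency disjointness
      intro u v h
      obtain ⟨a, ha1, ha2, hv⟩ := getA u v h
      apply key
      · have : v - u = ((a : ℕ) : ZMod n) := by rw [hv]; ring
        rw [this, hvalpos _ (by omega)]
        omega
      · have : u - v = (-(a : ℕ) : ZMod n) := by rw [hv]; ring
        rw [this, hvalneg _ (by omega) (by omega)]
        omega
    · -- the oriented condition
      intro x y z w hxy hzw hnd
      obtain ⟨a, ha1, ha2, hy⟩ := getA x y hxy
      obtain ⟨c, hc1, hc2, hw⟩ := getA z w hzw
      have ov : (w - x).val < m ∨ (x - w).val < m := by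
        by_contra h
        push_neg at h
        exact hnd (key x w h.1 h.2)
      rcases ov with hs | hs
      · set s := (w - x).val with hsdef
        have hwx : ((s : ℕ) : ZMod n) = w - x := ZMod.natCast_rightInverse _
        have h1 : y - z = ((a + c - s : ℕ) : ZMod n) := by
          have hz : z = w - (c : ℕ) := by rw [hw]; ring
          rw [hy, hz]
          push_cast [Nat.cast_sub (by omega : s ≤ a + c)]
          linear_combination hwx
        have h2 : z - y = (-((a + c - s : ℕ)) : ZMod n) := by
          rw [← h1]; ring
        apply key
        · rw [h2, hvalneg _ (by omega) (by omega)]; omega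
        · rw [h1, hvalpos _ (by omega)]; omega
      · set s := (x - w).val with hsdef
        have hwx : ((s : ℕ) : ZMod n) = x - w := ZMod.natCast_rightInverse _
        have h1 : y - z = ((a + c + s : ℕ) : ZMod n) := by
          have hz : z = w - (c : ℕ) := by rw [hw]; ring
          rw [hy, hz]
          push_cast
          linear_combination -hwx
        have h2 : z - y = (-((a + c + s : ℕ)) : ZMod n) := by
          rw [← h1]; ring
        apply key
        · rw [h2, hvalneg _ (by omega) (by omega)]; omega
        · rw [h1, hvalpos _ (by omega)]; omega
  refine ⟨hcol, ?_⟩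
  apply csInf_le
  · refine ⟨0, ?_⟩
    rintro x ⟨b, k, f, hb, _, rfl⟩
    positivity
  · refine ⟨m, n, F, hm0, hcol, ?_⟩
    rw [hndef, hmdef]
    have h2 : (2 : ℝ) ^ l ≠ 0 := by positivity
    push_cast
    field_simp
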